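/- For integers k ≥ 1 and l, the abelianization of Γ_{k,l} is isomorphic to (ℤ/kℤ) × ℤ × ℤ, where the torsion factor ℤ/kℤ is generated by the class of x, the two infinite cyclic factors are generated by the classes of y and t, and the class of z is trivial. -/

import Mathlib

namespace Stmt8

/-- The free group generators `x, y, z, t` for the `Nil⁴` group. -/
private abbrev gx : FreeGroup (Fin 4) := FreeGroup.of 0
private abbrev gy : FreeGroup (Fin 4) := FreeGroup.of 1
private abbrev gz : FreeGroup (Fin 4) := FreeGroup.of 2
private abbrev gt : FreeGroup (Fin 4) := FreeGroup.of 3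

/-- The relators of the presentation
`⟨x, y, z, t | t x t⁻¹ = x, t y t⁻¹ = xᵏ y zˡ, t z t⁻¹ = z, [x,y] = z, xz = zx, yz = zy⟩`. -/
def nilRels (k l : ℤ) : Set (FreeGroup (Fin 4)) :=
  { gt * gx * gt⁻¹ * gx⁻¹,
    gt * gy * gt⁻¹ * (gx ^ k * gy * gz ^ l)⁻¹,
    gt * gz * gt⁻¹ * gz⁻¹,
    gx * gy * gx⁻¹ * gy⁻¹ * gz⁻¹,
    gx * gz * gx⁻¹ * gz⁻¹,
    gy * gz * gy⁻¹ * gz⁻¹ }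

/-- `Γ k l`, the (finite index model of the) fundamental group of a closed `Nil⁴`-manifold. -/
abbrev Γ (k l : ℤ) : Type := PresentedGroup (nilRels k l)

/-- The images of the generators in `Γ k l`. -/
def xΓ (k l : ℤ) : Γ k l := PresentedGroup.of 0
def yΓ (k l : ℤ) : Γ k l := PresentedGroup.of 1
def zΓ (k l : ℤ) : Γ k l := PresentedGroup.of 2
def tΓ (k l : ℤ) : Γ k l := PresentedGroup.of 3

variable (k l : ℤ)

/-- target -/
abbrev M (k : ℤ) : Type := Multiplicative (ZMod k.toNat × ℤ × ℤ)

def fgen (k : ℤ) : Fin 4 → M k :=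
  ![Multiplicative.ofAdd ((1 : ZMod k.toNat), (0:ℤ), (0:ℤ)),
    Multiplicative.ofAdd ((0 : ZMod k.toNat), (1:ℤ), (0:ℤ)),
    1,
    Multiplicative.ofAdd ((0 : ZMod k.toNat), (0:ℤ), (1:ℤ))]

theorem castk (hk : 1 ≤ k) : ((k : ℤ) : ZMod k.toNat) = 0 := by
  rw [show (k:ℤ) = ((k.toNat : ℕ) : ℤ) by omega]
  push_cast
  exact ZMod.natCast_self _

theorem fgen_rels (hk : 1 ≤ k) : ∀ r ∈ nilRels k l, FreeGroup.lift (fgen k) r = 1 := by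
  intro r hr
  simp only [nilRels, Set.mem_insert_iff, Set.mem_singleton_iff] at hr
  rcases hr with rfl | rfl | rfl | rfl | rfl | rfl <;>
    simp only [map_mul, map_inv, map_zpow, FreeGroup.lift_apply_of, fgen,
      Matrix.cons_val_zero, Matrix.cons_val_one, Matrix.head_cons, Matrix.cons_val_two,
      Matrix.tail_cons, Matrix.cons_val_three] <;>
  · rw [← ofAdd_zero]
    simp only [← ofAdd_neg, ← ofAdd_zsmul, ← ofAdd_add, inv_one, mul_one, one_mul,
      one_zpow, ofAdd_zero]
    congr 1
    simp [Prod.ext_iff, smul_zero, castk k hk]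

def φ₀ (hk : 1 ≤ k) : Γ k l →* M k := PresentedGroup.toGroup (fgen_rels k l hk)

/-- free group → abelianization of Γ -/
def ρ (k l : ℤ) : FreeGroup (Fin 4) →* Abelianization (Γ k l) :=
  Abelianization.of.comp (QuotientGroup.mk' (Subgroup.normalClosure (nilRels k l)))

theorem ρ_of (i : Fin 4) : ρ k l (FreeGroup.of i) = Abelianization.of (PresentedGroup.of i) := rfl

theorem ρ_rel {r : FreeGroup (Fin 4)} (hr : r ∈ nilRels k l) : ρ k l r = 1 := by
  have : (QuotientGroup.mk' (Subgroup.normalClosure (nilRels k l))) r = 1 := by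
    rw [QuotientGroup.mk'_apply, QuotientGroup.eq_one_iff]
    exact Subgroup.subset_normalClosure hr
  show Abelianization.of ((QuotientGroup.mk' (Subgroup.normalClosure (nilRels k l))) r) = 1
  rw [this, map_one]

theorem hz1 : Abelianization.of (zΓ k l) = 1 := by
  have h := ρ_rel k l (show gx * gy * gx⁻¹ * gy⁻¹ * gz⁻¹ ∈ nilRels k l by
    simp [nilRels])
  simp only [map_mul, map_inv, ρ_of] at h
  set X := Abelianization.of (PresentedGroup.of (rels := nilRels k l) 0)
  set Y := Abelianization.of (PresentedGroup.of (rels := nilRels k l) 1)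
  have : X * Y * X⁻¹ * Y⁻¹ = 1 := by
    rw [mul_comm X Y]; group
  rw [this, one_mul, inv_eq_one] at h
  simpa [zΓ] using h

theorem hxk : Abelianization.of (xΓ k l) ^ k = 1 := by
  have h := ρ_rel k l (show gt * gy * gt⁻¹ * (gx ^ k * gy * gz ^ l)⁻¹ ∈ nilRels k l by
    simp [nilRels])
  simp only [map_mul, map_inv, map_zpow, ρ_of] at h
  have hz := hz1 k l
  rw [zΓ] at hz
  rw [hz, one_zpow, mul_one] at h
  set X := Abelianization.of (PresentedGroup.of (rels := nilRels k l) 0)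
  set Y := Abelianization.of (PresentedGroup.of (rels := nilRels k l) 1)
  set T := Abelianization.of (PresentedGroup.of (rels := nilRels k l) 3)
  have h2 : T * Y * T⁻¹ * (Y⁻¹ * (X ^ k)⁻¹) = 1 := by
    rw [mul_inv_rev] at h; convert h using 2
  have : T * Y * T⁻¹ * (Y⁻¹ * (X ^ k)⁻¹) = (X ^ k)⁻¹ := by
    rw [mul_comm T Y]; group
  rw [this, inv_eq_one] at h2
  exact h2

namespace Aux
variable (k l : ℤ)

def χ (hk : 1 ≤ k) : ZMod k.toNat →+ Additive (Abelianization (Γ k l)) :=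
  ZMod.lift k.toNat ⟨zmultiplesHom _ (Additive.ofMul (Abelianization.of (xΓ k l))), by
    simp only [zmultiplesHom_apply, ← ofMul_zpow]
    rw [show ((k.toNat : ℤ)) = k by omega, hxk k l, ofMul_one]⟩

def ψ (hk : 1 ≤ k) : M k →* Abelianization (Γ k l) :=
  AddMonoidHom.toMultiplicativeLeft
    ((χ k l hk).coprod
      ((zmultiplesHom _ (Additive.ofMul (Abelianization.of (yΓ k l)))).coprod
       (zmultiplesHom _ (Additive.ofMul (Abelianization.of (tΓ k l))))))

theorem ψ_apply (hk : 1 ≤ k) (a : ZMod k.toNat) (b c : ℤ) :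
    ψ k l hk (Multiplicative.ofAdd (a, b, c)) =
      Additive.toMul (χ k l hk a) * Abelianization.of (yΓ k l) ^ b
        * Abelianization.of (tΓ k l) ^ c := by
  simp [ψ, AddMonoidHom.coprod_apply, toMul_add, mul_assoc]

def φ (hk : 1 ≤ k) : Abelianization (Γ k l) →* M k := Abelianization.lift (φ₀ k l hk)

theorem φ_of (hk : 1 ≤ k) (i : Fin 4) :
    φ k l hk (Abelianization.of (PresentedGroup.of i)) = fgen k i := by
  simp only [φ, Abelianization.lift_apply_of]
  exact PresentedGroup.toGroup.of _

theorem comp1 (hk : 1 ≤ k) : (ψ k l hk).comp (φ k l hk) = MonoidHom.id _ := by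
  apply Abelianization.hom_ext
  apply PresentedGroup.ext
  intro i
  show ψ k l hk (φ k l hk (Abelianization.of (PresentedGroup.of i))) =
      Abelianization.of (PresentedGroup.of i)
  rw [φ_of]
  fin_cases i
  · show ψ k l hk (Multiplicative.ofAdd ((1 : ZMod k.toNat), (0:ℤ), (0:ℤ))) = _
    rw [ψ_apply, zpow_zero, zpow_zero, mul_one, mul_one]
    rw [show (1 : ZMod k.toNat) = ((1 : ℤ) : ZMod k.toNat) by push_cast; ring]
    rw [χ, ZMod.lift_coe]
    simp [xΓ]
  · show ψ k l hk (Multiplicative.ofAdd ((0 : ZMod k.toNat), (1:ℤ), (0:ℤ))) = _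
    rw [ψ_apply, zpow_zero, mul_one, zpow_one, map_zero, toMul_zero, one_mul]
    rfl
  · show ψ k l hk 1 = _
    rw [map_one]
    exact (hz1 k l).symm
  · show ψ k l hk (Multiplicative.ofAdd ((0 : ZMod k.toNat), (0:ℤ), (1:ℤ))) = _
    rw [ψ_apply, zpow_zero, mul_one, zpow_one, map_zero, toMul_zero, one_mul]
    rfl

theorem φχ (hk : 1 ≤ k) (a : ZMod k.toNat) :
    φ k l hk (Additive.toMul (χ k l hk a)) = Multiplicative.ofAdd (a, (0:ℤ), (0:ℤ)) := by
  haveI : NeZero k.toNat := ⟨by omega⟩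
  conv_lhs => rw [← ZMod.intCast_zmod_cast a]
  rw [χ, ZMod.lift_coe]
  simp only [zmultiplesHom_apply, toMul_zsmul, toMul_ofMul, map_zpow]
  rw [xΓ, φ_of]
  show Multiplicative.ofAdd ((1 : ZMod k.toNat), (0:ℤ), (0:ℤ)) ^ ((ZMod.cast a : ℤ)) = _
  rw [← ofAdd_zsmul]
  congr 1
  refine Prod.ext ?_ (Prod.ext ?_ ?_) <;>
    simp [ZMod.intCast_zmod_cast]

theorem comp2 (hk : 1 ≤ k) : (φ k l hk).comp (ψ k l hk) = MonoidHom.id _ := by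
  refine MonoidHom.ext fun x => ?_
  show φ k l hk (ψ k l hk x) = x
  rw [show x = Multiplicative.ofAdd ((Multiplicative.toAdd x).1,
    (Multiplicative.toAdd x).2.1, (Multiplicative.toAdd x).2.2) from rfl]
  rw [ψ_apply, map_mul, map_mul, map_zpow, map_zpow, φχ k l hk,
    yΓ, tΓ, φ_of, φ_of]
  show _ * Multiplicative.ofAdd ((0 : ZMod k.toNat), (1:ℤ), (0:ℤ)) ^ _
      * Multiplicative.ofAdd ((0 : ZMod k.toNat), (0:ℤ), (1:ℤ)) ^ _ = _
  rw [← ofAdd_zsmul, ← ofAdd_zsmul, ← ofAdd_add, ← ofAdd_add]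
  congr 1
  refine Prod.ext ?_ (Prod.ext ?_ ?_) <;> simp

end Aux

/-- For integers `k ≥ 1` and `l`, the abelianization of `Γ k l` is
isomorphic to `(ℤ/kℤ) × ℤ × ℤ`, where the torsion factor `ℤ/kℤ` is generated by the class
of `x`, the two infinite cyclic factors are generated by the classes of `y` and `t`, and
the class of `z` is trivial. -/
theorem stmt8 (k l : ℤ) (hk : 1 ≤ k) :
    ∃ e : Abelianization (Γ k l) ≃* Multiplicative (ZMod k.toNat × ℤ × ℤ),
      e (Abelianization.of (xΓ k l)) = Multiplicative.ofAdd ((1 : ZMod k.toNat), 0, 0) ∧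
      e (Abelianization.of (yΓ k l)) = Multiplicative.ofAdd ((0 : ZMod k.toNat), 1, 0) ∧
      e (Abelianization.of (tΓ k l)) = Multiplicative.ofAdd ((0 : ZMod k.toNat), 0, 1) ∧
      e (Abelianization.of (zΓ k l)) = 1 := by
  refine ⟨MonoidHom.toMulEquiv (Aux.φ k l hk) (Aux.ψ k l hk)
    (Aux.comp1 k l hk) (Aux.comp2 k l hk), ?_, ?_, ?_, ?_⟩
  · show Aux.φ k l hk (Abelianization.of (xΓ k l)) = _
    rw [xΓ, Aux.φ_of]; rfl
  · show Aux.φ k l hk (Abelianization.of (yΓ k l)) = _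
    rw [yΓ, Aux.φ_of]; rfl
  · show Aux.φ k l hk (Abelianization.of (tΓ k l)) = _
    rw [tΓ, Aux.φ_of]; rfl
  · show Aux.φ k l hk (Abelianization.of (zΓ k l)) = _
    rw [zΓ, Aux.φ_of]; rfl

end Stmt8
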